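/- For every even integer k ≥ 4 and every integer ℓ, there exists a signed graph Ĝ whose underlying graph is outerplanar such that the strong exact-distance -k graph of Ĝ contains a clique of size ℓ, hence χ of the strong exact-distance -k graph is at least ℓ. -/

import Mathlib

open SimpleGraph

/-- The number of negative edges of a walk, where `σ e = true` means edge `e` is negative. -/
def negCount {V : Type} {G : SimpleGraph V} (σ : Sym2 V → Bool) {x y : V}
    (p : G.Walk x y) : ℕ :=
  (p.edges.filter (fun e => σ e)).length

/-- A walk is negative if it contains an odd number of negative edges. -/
def IsNegWalk {V : Type} {G : SimpleGraph V} (σ : Sym2 V → Bool) {x y : V}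
    (p : G.Walk x y) : Prop :=
  Odd (negCount σ p)

/-- The exact-distance `-k` graph of the signed graph `(G, σ)`:
`xy` is an edge iff `d_G(x,y) = k` and every `xy`-path of length `k` is negative. -/
def exactDistNeg {V : Type} (G : SimpleGraph V) (σ : Sym2 V → Bool) (k : ℕ) :
    SimpleGraph V :=
  SimpleGraph.fromRel (fun x y =>
    G.dist x y = k ∧ ∀ p : G.Walk x y, p.IsPath → p.length = k → IsNegWalk σ p)

/-- The strong exact-distance `-k` graph of the signed graph `(G, σ)`:
`xy` is an edge iff `d_G(x,y) = k` and some `xy`-path of length `k` is negative. -/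
def strongExactDistNeg {V : Type} (G : SimpleGraph V) (σ : Sym2 V → Bool) (k : ℕ) :
    SimpleGraph V :=
  SimpleGraph.fromRel (fun x y =>
    G.dist x y = k ∧ ∃ p : G.Walk x y, p.IsPath ∧ p.length = k ∧ IsNegWalk σ p)

/-- `WReach G L k y` : the set of vertices weakly `k`-reachable from `y` w.r.t. ordering `L`. -/
def WReach {V : Type} (G : SimpleGraph V) (L : LinearOrder V) (k : ℕ) (y : V) : Set V :=
  {x | ∃ p : G.Walk x y, p.IsPath ∧ p.length ≤ k ∧ ∀ z ∈ p.support, L.le x z}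

/-- The weak `k`-colouring number of `G`. -/
noncomputable def wcol {V : Type} (G : SimpleGraph V) (k : ℕ) : ℕ :=
  ⨅ L : LinearOrder V, ⨆ y : V, (WReach G L k y).ncard

/-- `DReach G L k y` : the set of vertices `x` such that there is an `xy`-path
`z_0, …, z_s` (`x = z_0`, `y = z_s`) of length `s ≤ k` on which `x` is the `L`-minimum
and `y ≤_L z_i` for all `⌊k/2⌋ + 1 ≤ i ≤ s`. -/
def DReach {V : Type} (G : SimpleGraph V) (L : LinearOrder V) (k : ℕ) (y : V) : Set V :=
  {x | ∃ p : G.Walk x y, p.IsPath ∧ p.length ≤ k ∧ (∀ z ∈ p.support, L.le x z) ∧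
        ∀ i, k / 2 + 1 ≤ i → i ≤ p.length → L.le y (p.support.getD i y)}

/-- The distance-`k`-colouring number of `G`. -/
noncomputable def dcol {V : Type} (G : SimpleGraph V) (k : ℕ) : ℕ :=
  ⨅ L : LinearOrder V, ⨆ y : V, (DReach G L k y).ncard

/-- `SReach G L k y` : the set of vertices strongly `k`-reachable from `y` w.r.t. `L`. -/
def SReach {V : Type} (G : SimpleGraph V) (L : LinearOrder V) (k : ℕ) (y : V) : Set V :=
  {x | ∃ p : G.Walk x y, p.IsPath ∧ p.length ≤ k ∧ (∀ z ∈ p.support, L.le x z) ∧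
        ∀ z ∈ p.support, z ≠ x → L.le y z}

/-- The strong `k`-colouring number of `G`. -/
noncomputable def scol {V : Type} (G : SimpleGraph V) (k : ℕ) : ℕ :=
  ⨅ L : LinearOrder V, ⨆ y : V, (SReach G L k y).ncard

/-- `H` is a minor of `G` (branch-set definition). -/
def IsMinor {W V : Type} (H : SimpleGraph W) (G : SimpleGraph V) : Prop :=
  ∃ B : W → Set V,
    (∀ w, (B w).Nonempty) ∧
    (∀ w, (G.induce (B w)).Connected) ∧
    (Pairwise (Function.onFun Disjoint B)) ∧
    ∀ w w', H.Adj w w' → ∃ u ∈ B w, ∃ v ∈ B w', G.Adj u v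

/-- `G` is planar iff it has no `K₅` and no `K₃,₃` minor (Wagner's theorem). -/
def IsPlanar {V : Type} (G : SimpleGraph V) : Prop :=
  ¬ IsMinor (completeGraph (Fin 5)) G ∧
  ¬ IsMinor (completeBipartiteGraph (Fin 3) (Fin 3)) G

/-- `G` is outerplanar iff it has no `K₄` and no `K₂,₃` minor. -/
def IsOuterplanar {V : Type} (G : SimpleGraph V) : Prop :=
  ¬ IsMinor (completeGraph (Fin 4)) G ∧
  ¬ IsMinor (completeBipartiteGraph (Fin 2) (Fin 3)) G

/-- `G` has treewidth at most `t` (tree-decomposition definition). -/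
def HasTreewidthLE {V : Type} (G : SimpleGraph V) (t : ℕ) : Prop :=
  ∃ (ι : Type) (T : SimpleGraph ι) (B : ι → Finset V),
    T.Connected ∧ T.IsAcyclic ∧
    (∀ v, ∃ i, v ∈ B i) ∧
    (∀ u v, G.Adj u v → ∃ i, u ∈ B i ∧ v ∈ B i) ∧
    (∀ v, (T.induce {i | v ∈ B i}).Connected) ∧
    (∀ i, (B i).card ≤ t + 1)
abbrev SpV (ℓ n : ℕ) := Option (Fin ℓ × Fin n)

def spRel (ℓ n : ℕ) : SpV ℓ n → SpV ℓ n → Prop :=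
  fun x y => match x, y with
  | none, some (_, j) => j.val = 0 ∨ j.val + 1 = n
  | some (i, j), some (i', j') => i = i' ∧ j.val + 1 = j'.val
  | _, _ => False

def spider (ℓ n : ℕ) : SimpleGraph (SpV ℓ n) := SimpleGraph.fromRel (spRel ℓ n)

lemma spider_adj {ℓ n : ℕ} {x y : SpV ℓ n} :
    (spider ℓ n).Adj x y ↔ x ≠ y ∧ (spRel ℓ n x y ∨ spRel ℓ n y x) := by
  simp [spider, SimpleGraph.fromRel_adj]

lemma adj_some_some {ℓ n : ℕ} {i i' : Fin ℓ} {j j' : Fin n}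
    (h : (spider ℓ n).Adj (some (i, j)) (some (i', j'))) :
    i = i' ∧ (j.val + 1 = j'.val ∨ j'.val + 1 = j.val) := by
  rw [spider_adj] at h
  rcases h with ⟨-, h | h⟩
  · exact ⟨h.1, Or.inl h.2⟩
  · exact ⟨h.1.symm, Or.inr h.2⟩

lemma adj_none_some {ℓ n : ℕ} {i : Fin ℓ} {j : Fin n}
    (h : (spider ℓ n).Adj none (some (i, j))) : j.val = 0 ∨ j.val + 1 = n := by
  rw [spider_adj] at h
  rcases h with ⟨-, h | h⟩
  · exact h
  · exact h.elim

lemma adj_none {ℓ n : ℕ} (i : Fin ℓ) (j : Fin n) (h : j.val = 0 ∨ j.val + 1 = n) :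
    (spider ℓ n).Adj none (some (i, j)) := by
  rw [spider_adj]
  exact ⟨by simp, Or.inl h⟩

lemma adj_step {ℓ n : ℕ} (i : Fin ℓ) (j j' : Fin n) (h : j.val + 1 = j'.val) :
    (spider ℓ n).Adj (some (i, j)) (some (i, j')) := by
  rw [spider_adj]
  refine ⟨by simp; omega, Or.inl ⟨rfl, h⟩⟩

def spPhi {ℓ n : ℕ} : SpV ℓ n → ℕ
  | none => 0
  | some (_, j) => min (j.val + 1) (n - j.val)

lemma spPhi_adj {ℓ n : ℕ} {x y : SpV ℓ n} (h : (spider ℓ n).Adj x y) :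
    spPhi x ≤ spPhi y + 1 := by
  match x, y with
  | none, none => simp at h
  | none, some (i, j) => simp [spPhi]
  | some (i, j), none =>
      have := adj_none_some h.symm
      have hj := j.isLt
      simp only [spPhi]
      omega
  | some (i, j), some (i', j') =>
      have := (adj_some_some h).2
      have hj := j.isLt
      have hj' := j'.isLt
      simp only [spPhi]
      omega

lemma spPhi_walk {ℓ n : ℕ} {x y : SpV ℓ n} (p : (spider ℓ n).Walk x y) :
    spPhi x ≤ spPhi y + p.length := by
  induction p with
  | nil => simp
  | cons h p ih =>
      have := spPhi_adj h
      simp only [SimpleGraph.Walk.length_cons]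
      omega

lemma branch_const {ℓ n : ℕ} : ∀ {x y : SpV ℓ n} (p : (spider ℓ n).Walk x y),
    none ∉ p.support → ∀ {i j i' j'}, x = some (i, j) → y = some (i', j') → i = i' := by
  intro x y p
  induction p with
  | nil =>
      intro _ i j i' j' hx hy
      rw [hx] at hy
      exact (Prod.mk.injEq .. ▸ Option.some_inj.mp hy).1
  | @cons a b c h p ih =>
      intro hns i j i' j' hx hy
      simp only [SimpleGraph.Walk.support_cons, List.mem_cons] at hns
      push_neg at hns
      have hb : b ≠ none := fun hb => hns.2 (hb ▸ p.start_mem_support)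
      obtain ⟨⟨ib, jb⟩, hbeq⟩ := Option.ne_none_iff_exists'.mp hb
      subst hx hy hbeq
      have h1 := (adj_some_some h).1
      exact h1 ▸ ih hns.2 rfl rfl

def desc {ℓ n : ℕ} (i : Fin ℓ) (a : ℕ) (ha : a < n) : (d : ℕ) → d ≤ a →
    (spider ℓ n).Walk (some (i, ⟨a, ha⟩)) (some (i, ⟨a - d, by omega⟩))
  | 0, _ => SimpleGraph.Walk.nil
  | d+1, h => (desc i a ha d (by omega)).concat
      ((adj_step i ⟨a - (d+1), by omega⟩ ⟨a - d, by omega⟩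
        (by simp only [Fin.val_mk]; omega)).symm)

lemma desc_length {ℓ n : ℕ} (i : Fin ℓ) (a : ℕ) (ha : a < n) (d : ℕ) (hd : d ≤ a) :
    (desc i a ha d hd).length = d := by
  induction d with
  | zero => rfl
  | succ d ih => rw [desc, SimpleGraph.Walk.length_concat, ih]

lemma desc_support {ℓ n : ℕ} (i : Fin ℓ) (a : ℕ) (ha : a < n) (d : ℕ) (hd : d ≤ a) (z : SpV ℓ n) :
    z ∈ (desc i a ha d hd).support ↔
      ∃ (j : ℕ) (hj : j < n), a - d ≤ j ∧ j ≤ a ∧ z = some (i, ⟨j, hj⟩) := by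
  induction d with
  | zero =>
      simp only [desc, SimpleGraph.Walk.support_nil, List.mem_singleton]
      constructor
      · rintro rfl; exact ⟨a, ha, by omega, le_refl a, rfl⟩
      · rintro ⟨j, hj, h1, h2, rfl⟩
        have : j = a := by omega
        subst this; rfl
  | succ d ih =>
      rw [desc, SimpleGraph.Walk.support_concat, List.mem_append,
        List.mem_singleton, ih (by omega)]
      constructor
      · rintro (⟨j, hj, h1, h2, rfl⟩ | rfl)
        · exact ⟨j, hj, by omega, h2, rfl⟩
        · exact ⟨a - (d+1), by omega, by omega, by omega, rfl⟩
      · rintro ⟨j, hj, h1, h2, rfl⟩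
        by_cases hja : a - d ≤ j
        · exact Or.inl ⟨j, hj, hja, h2, rfl⟩
        · right
          have : j = a - (d+1) := by omega
          subst this; rfl

lemma desc_isPath {ℓ n : ℕ} (i : Fin ℓ) (a : ℕ) (ha : a < n) (d : ℕ) (hd : d ≤ a) :
    (desc i a ha d hd).IsPath := by
  induction d with
  | zero => exact SimpleGraph.Walk.IsPath.nil
  | succ d ih =>
      rw [desc, SimpleGraph.Walk.isPath_def, SimpleGraph.Walk.support_concat,
        List.nodup_append]
      refine ⟨(ih (by omega)).support_nodup, List.nodup_singleton _, ?_⟩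
      intro z hz z' hz2 hzz; subst hzz
      rw [List.mem_singleton] at hz2
      subst hz2
      rw [desc_support] at hz
      obtain ⟨j, hj, h1, h2, heq⟩ := hz
      have : a - (d+1) = j := by
        have := congrArg (fun z => ((z.getD (i, ⟨0, by omega⟩)).2 : Fin n).val) heq
        simpa using this
      omega

lemma desc_edges_no_none {ℓ n : ℕ} (i : Fin ℓ) (a : ℕ) (ha : a < n) (d : ℕ) (hd : d ≤ a)
    (e : Sym2 (SpV ℓ n)) (he : e ∈ (desc i a ha d hd).edges) : none ∉ e := by
  induction d with
  | zero => simp [desc] at he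
  | succ d ih =>
      rw [desc, SimpleGraph.Walk.edges_concat, List.concat_eq_append, List.mem_append,
        List.mem_singleton] at he
      rcases he with he | rfl
      · exact ih (by omega) he
      · simp

def spSign (ℓ n : ℕ) : Sym2 (SpV ℓ n) → Bool :=
  fun e => decide (none ∈ e ∧ ∃ (i : Fin ℓ) (j : Fin n), j.val = 0 ∧ some (i, j) ∈ e)

lemma spSign_no_none {ℓ n : ℕ} (e : Sym2 (SpV ℓ n)) (h : none ∉ e) : spSign ℓ n e = false := by
  simp only [spSign, decide_eq_false_iff_not, not_and]
  intro h'
  exact absurd h' h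

section Main

variable {ℓ m n : ℕ}

lemma leafPair (hm : 2 ≤ m) (hn : n = 2*m - 1) (i i' : Fin ℓ) (hne : i ≠ i') :
    ∃ p : (spider ℓ n).Walk (some (i, ⟨m-1, by omega⟩)) (some (i', ⟨m-1, by omega⟩)),
      p.IsPath ∧ p.length = 2*m ∧ IsNegWalk (spSign ℓ n) p := by
  have ha1 : m - 1 < n := by omega
  have ha2 : n - 1 < n := by omega
  have hd2 : m - 1 ≤ n - 1 := by omega
  set part1 := desc i (m-1) ha1 (m-1) le_rfl with hpart1
  set part2 := desc i' (n-1) ha2 (m-1) hd2 with hpart2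
  have e1 : (spider ℓ n).Adj (some (i, ⟨(m-1) - (m-1), by omega⟩)) none :=
    (adj_none i _ (Or.inl (by simp only [Fin.val_mk]; omega))).symm
  have e2 : (spider ℓ n).Adj none (some (i', ⟨n-1, ha2⟩)) :=
    adj_none i' _ (Or.inr (by simp only [Fin.val_mk]; omega))
  have hcopy : (some (i', ⟨(n-1) - (m-1), by omega⟩) : SpV ℓ n) = some (i', ⟨m-1, by omega⟩) := by
    simp only [Option.some_inj, Prod.mk.injEq, Fin.mk.injEq]
    exact ⟨by trivial, by omega⟩
  refine ⟨((part1.concat e1).append (SimpleGraph.Walk.cons e2 part2)).copy rfl hcopy, ?_, ?_, ?_⟩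
  · rw [SimpleGraph.Walk.isPath_def, SimpleGraph.Walk.support_copy,
      SimpleGraph.Walk.support_append, SimpleGraph.Walk.support_concat,
      SimpleGraph.Walk.support_cons, List.tail_cons,
      List.nodup_append, List.nodup_append]
    refine ⟨⟨(desc_isPath _ _ _ _ _).support_nodup, List.nodup_singleton _, ?_⟩,
      (desc_isPath _ _ _ _ _).support_nodup, ?_⟩
    · intro z hz z' hz2 hzz; subst hzz
      rw [List.mem_singleton] at hz2
      subst hz2
      rw [desc_support] at hz
      obtain ⟨j, hj, -, -, heq⟩ := hz
      cases heq
    · intro z hz z' hz2 hzz; subst hzz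
      rw [desc_support] at hz2
      obtain ⟨j2, hj2, hlo2, -, rfl⟩ := hz2
      rw [List.mem_append, List.mem_singleton] at hz
      rcases hz with hz | hz
      · rw [desc_support] at hz
        obtain ⟨j1, hj1, -, -, heq⟩ := hz
        rw [Option.some_inj, Prod.mk.injEq] at heq
        exact hne heq.1.symm
      · cases hz
  · rw [SimpleGraph.Walk.length_copy, SimpleGraph.Walk.length_append,
      SimpleGraph.Walk.length_concat, SimpleGraph.Walk.length_cons,
      desc_length, desc_length]
    omega
  · unfold IsNegWalk negCount
    rw [SimpleGraph.Walk.edges_copy, SimpleGraph.Walk.edges_append,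
      SimpleGraph.Walk.edges_concat, SimpleGraph.Walk.edges_cons,
      List.concat_eq_append, List.filter_append, List.filter_append]
    have h1 : part1.edges.filter (spSign ℓ n) = [] := by
      rw [List.filter_eq_nil_iff]
      intro e he
      rw [spSign_no_none e (desc_edges_no_none _ _ _ _ _ e he)]
      simp
    have h2 : part2.edges.filter (spSign ℓ n) = [] := by
      rw [List.filter_eq_nil_iff]
      intro e he
      rw [spSign_no_none e (desc_edges_no_none _ _ _ _ _ e he)]
      simp
    have hσ1 : spSign ℓ n s(some (i, ⟨(m-1) - (m-1), by omega⟩), none) = true := by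
      rw [spSign, decide_eq_true_iff]
      exact ⟨by simp, i, ⟨(m-1) - (m-1), by omega⟩, by simp only [Fin.val_mk]; omega, by simp⟩
    have hσ2 : spSign ℓ n s(none, some (i', ⟨n-1, ha2⟩)) = false := by
      rw [spSign, decide_eq_false_iff_not]
      rintro ⟨-, q, j, hj0, hjmem⟩
      rw [Sym2.mem_iff] at hjmem
      rcases hjmem with h | h
      · cases h
      · rw [Option.some_inj, Prod.mk.injEq] at h
        have := congrArg Fin.val h.2
        simp only [Fin.val_mk] at this
        omega
    simp only [List.filter_cons, hσ1, hσ2, if_true, if_false, h1, h2, List.filter_nil,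
      List.append_nil, List.nil_append, List.length_cons, List.length_nil]
    exact odd_one

lemma leaf_dist_lower (hm : 2 ≤ m) (hn : n = 2*m - 1) (i i' : Fin ℓ) (hne : i ≠ i')
    (p : (spider ℓ n).Walk (some (i, ⟨m-1, by omega⟩)) (some (i', ⟨m-1, by omega⟩))) :
    2*m ≤ p.length := by
  have hmem : (none : SpV ℓ n) ∈ p.support := by
    by_contra h
    exact hne (branch_const p h rfl rfl)
  have hsplit := p.take_spec hmem
  have hlen : (p.takeUntil none hmem).length + (p.dropUntil none hmem).length = p.length := by
    conv_rhs => rw [← hsplit]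
    rw [SimpleGraph.Walk.length_append]
  have hphi : spPhi (some (i, ⟨m-1, by omega⟩) : SpV ℓ n) = m := by
    simp only [spPhi, Fin.val_mk]
    omega
  have hphi' : spPhi (some (i', ⟨m-1, by omega⟩) : SpV ℓ n) = m := by
    simp only [spPhi, Fin.val_mk]
    omega
  have h1 := spPhi_walk (p.takeUntil none hmem)
  have h2 := spPhi_walk (p.dropUntil none hmem).reverse
  rw [SimpleGraph.Walk.length_reverse] at h2
  rw [hphi] at h1
  rw [hphi'] at h2
  simp only [spPhi] at h1 h2
  omega

lemma leaf_dist (hm : 2 ≤ m) (hn : n = 2*m - 1) (i i' : Fin ℓ) (hne : i ≠ i') :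
    (spider ℓ n).dist (some (i, ⟨m-1, by omega⟩)) (some (i', ⟨m-1, by omega⟩)) = 2*m := by
  obtain ⟨p, hpath, hlen, -⟩ := leafPair hm hn i i' hne
  refine le_antisymm (le_trans (SimpleGraph.dist_le p) (le_of_eq hlen)) ?_
  obtain ⟨q, hq⟩ := p.reachable.exists_walk_length_eq_dist
  rw [← hq]
  exact leaf_dist_lower hm hn i i' hne q

end Main

def spCo {ℓ n : ℕ} : SpV ℓ n → ℕ
  | none => 0
  | some (_, j) => j.val

section Struct

variable {ℓ n : ℕ} {S : Set (SpV ℓ n)}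

lemma induce_walk_branch (hS : (none : SpV ℓ n) ∉ S) :
    ∀ {a b : S} (_ : ((spider ℓ n).induce S).Walk a b) {i j i' j'},
      (a : SpV ℓ n) = some (i, j) → (b : SpV ℓ n) = some (i', j') → i = i' := by
  intro a b p
  induction p with
  | nil =>
      intro i j i' j' ha hb
      rw [ha] at hb
      rw [Option.some_inj, Prod.mk.injEq] at hb
      exact hb.1
  | @cons a c b h q ih =>
      intro i j i' j' ha hb
      have hadj : (spider ℓ n).Adj (a : SpV ℓ n) (c : SpV ℓ n) := h
      have hc : (c : SpV ℓ n) ≠ none := fun hc => hS (hc ▸ c.2)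
      obtain ⟨⟨ic, jc⟩, hceq⟩ := Option.ne_none_iff_exists'.mp hc
      rw [ha, hceq] at hadj
      exact (adj_some_some hadj).1.trans (ih hceq hb)

lemma induce_walk_ivt (hS : (none : SpV ℓ n) ∉ S) :
    ∀ {a b : S} (_ : ((spider ℓ n).induce S).Walk a b) (t : ℕ),
      ((spCo (a : SpV ℓ n) ≤ t ∧ t ≤ spCo (b : SpV ℓ n)) ∨
       (spCo (b : SpV ℓ n) ≤ t ∧ t ≤ spCo (a : SpV ℓ n))) → ∃ z ∈ S, spCo z = t := by
  intro a b p
  induction p with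
  | @nil u =>
      intro t ht
      exact ⟨u, u.2, by omega⟩
  | @cons a c b h q ih =>
      intro t ht
      have hadj : (spider ℓ n).Adj (a : SpV ℓ n) (c : SpV ℓ n) := h
      have hc : (c : SpV ℓ n) ≠ none := fun hc => hS (hc ▸ c.2)
      have ha : (a : SpV ℓ n) ≠ none := fun ha => hS (ha ▸ a.2)
      obtain ⟨⟨ic, jc⟩, hceq⟩ := Option.ne_none_iff_exists'.mp hc
      obtain ⟨⟨ia, ja⟩, haeq⟩ := Option.ne_none_iff_exists'.mp ha
      rw [haeq, hceq] at hadj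
      have hstep := (adj_some_some hadj).2
      by_cases hrange : (spCo (c : SpV ℓ n) ≤ t ∧ t ≤ spCo (b : SpV ℓ n)) ∨
          (spCo (b : SpV ℓ n) ≤ t ∧ t ≤ spCo (c : SpV ℓ n))
      · exact ih t hrange
      · refine ⟨a, a.2, ?_⟩
        have hco1 : spCo (a : SpV ℓ n) = ja.val := by rw [haeq]; rfl
        have hco2 : spCo (c : SpV ℓ n) = jc.val := by rw [hceq]; rfl
        omega

lemma structure_lemma (hconn : ((spider ℓ n).induce S).Connected)
    (hnone : (none : SpV ℓ n) ∉ S) (hne : S.Nonempty) :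
    ∃ (i : Fin ℓ) (lo hi : ℕ), lo ≤ hi ∧ hi < n ∧
      (∀ z ∈ S, ∃ (jv : ℕ) (hjv : jv < n), z = some (i, ⟨jv, hjv⟩) ∧ lo ≤ jv ∧ jv ≤ hi) ∧
      (∀ t, lo ≤ t → t ≤ hi → ∃ (ht : t < n), some (i, ⟨t, ht⟩) ∈ S) := by
  obtain ⟨z0, hz0⟩ := hne
  have hz0n : z0 ≠ none := fun h => hnone (h ▸ hz0)
  obtain ⟨⟨i0, j0⟩, hz0eq⟩ := Option.ne_none_iff_exists'.mp hz0n
  set J : Set ℕ := {t | ∃ (ht : t < n), some (i0, ⟨t, ht⟩) ∈ S} with hJ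
  have hJ0 : j0.val ∈ J := ⟨j0.isLt, by rwa [Fin.eta, ← hz0eq]⟩
  have hJbdd : BddAbove J := ⟨n, fun t ⟨ht, _⟩ => le_of_lt ht⟩
  have hJne : J.Nonempty := ⟨j0.val, hJ0⟩
  obtain ⟨hlon, hloS⟩ := Nat.sInf_mem hJne
  obtain ⟨hhin, hhiS⟩ := Nat.sSup_mem hJne hJbdd
  -- membership structure
  have hmem : ∀ z ∈ S, ∃ (jv : ℕ) (hjv : jv < n), z = some (i0, ⟨jv, hjv⟩) ∧ jv ∈ J := by
    intro z hz
    have hzn : z ≠ none := fun h => hnone (h ▸ hz)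
    obtain ⟨⟨iz, jz⟩, hzeq⟩ := Option.ne_none_iff_exists'.mp hzn
    obtain ⟨p⟩ := hconn.preconnected ⟨z0, hz0⟩ ⟨z, hz⟩
    have hi : i0 = iz := induce_walk_branch hnone p hz0eq hzeq
    subst hi
    exact ⟨jz.val, jz.isLt, by rw [hzeq, Fin.eta], jz.isLt, by rwa [Fin.eta, ← hzeq]⟩
  refine ⟨i0, sInf J, sSup J, le_csSup hJbdd (Nat.sInf_mem hJne), hhin, ?_, ?_⟩
  · intro z hz
    obtain ⟨jv, hjv, hzeq', hjvJ⟩ := hmem z hz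
    exact ⟨jv, hjv, hzeq', Nat.sInf_le hjvJ, le_csSup hJbdd hjvJ⟩
  · intro t hlo hhi
    obtain ⟨p⟩ := hconn.preconnected ⟨some (i0, ⟨sInf J, hlon⟩), hloS⟩
      ⟨some (i0, ⟨sSup J, hhin⟩), hhiS⟩
    obtain ⟨z, hzS, hzco⟩ := induce_walk_ivt hnone p t (by
      left
      constructor
      · show spCo (some (i0, ⟨sInf J, hlon⟩)) ≤ t
        simpa [spCo] using hlo
      · show t ≤ spCo (some (i0, ⟨sSup J, hhin⟩))
        simpa [spCo] using hhi)
    obtain ⟨jv, hjv, hzeq', hjvJ⟩ := hmem z hzS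
    have : spCo z = jv := by rw [hzeq']; rfl
    subst hzeq'
    have : jv = t := by omega
    subst this
    exact ⟨hjv, hzS⟩

lemma sep_lemma {T : Set (SpV ℓ n)} (hdisj : Disjoint S T) {i : Fin ℓ} {lo1 hi1 lo2 hi2 : ℕ}
    (hint1 : ∀ t, lo1 ≤ t → t ≤ hi1 → ∃ (ht : t < n), some (i, ⟨t, ht⟩) ∈ S)
    (hint2 : ∀ t, lo2 ≤ t → t ≤ hi2 → ∃ (ht : t < n), some (i, ⟨t, ht⟩) ∈ T)
    (h1 : lo1 ≤ hi1) (h2 : lo2 ≤ hi2) :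
    hi1 < lo2 ∨ hi2 < lo1 := by
  by_contra hcon
  push_neg at hcon
  obtain ⟨ht1, hm1⟩ := hint1 (max lo1 lo2) (le_max_left _ _) (by omega)
  obtain ⟨ht2, hm2⟩ := hint2 (max lo1 lo2) (le_max_right _ _) (by omega)
  exact Set.disjoint_left.mp hdisj hm1 hm2

lemma edge_lemma {T : Set (SpV ℓ n)} {i1 i2 : Fin ℓ} {lo1 hi1 lo2 hi2 : ℕ}
    (hmem1 : ∀ z ∈ S, ∃ (jv : ℕ) (hjv : jv < n), z = some (i1, ⟨jv, hjv⟩) ∧ lo1 ≤ jv ∧ jv ≤ hi1)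
    (hmem2 : ∀ z ∈ T, ∃ (jv : ℕ) (hjv : jv < n), z = some (i2, ⟨jv, hjv⟩) ∧ lo2 ≤ jv ∧ jv ≤ hi2)
    (hadj : ∃ u ∈ S, ∃ v ∈ T, (spider ℓ n).Adj u v) :
    i1 = i2 ∧ ∃ j1 j2 : ℕ, lo1 ≤ j1 ∧ j1 ≤ hi1 ∧ lo2 ≤ j2 ∧ j2 ≤ hi2 ∧
      (j1 + 1 = j2 ∨ j2 + 1 = j1) := by
  obtain ⟨u, hu, v, hv, huv⟩ := hadj
  obtain ⟨j1, hj1, rfl, hl1, hh1⟩ := hmem1 u hu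
  obtain ⟨j2, hj2, rfl, hl2, hh2⟩ := hmem2 v hv
  obtain ⟨hi, hstep⟩ := adj_some_some huv
  exact ⟨hi, j1, j2, hl1, hh1, hl2, hh2, by simpa using hstep⟩

end Struct

lemma spider_no_K4 {ℓ n : ℕ} : ¬ IsMinor (completeGraph (Fin 4)) (spider ℓ n) := by
  rintro ⟨B, hBne, hBconn, hBdisj, hBadj⟩
  have hker : ∀ w w' : Fin 4, w ≠ w' → none ∈ B w → none ∈ B w' → False :=
    fun w w' hne h h' => Set.disjoint_left.mp (hBdisj hne) h h'
  obtain ⟨w1, w2, w3, h12, h13, h23, hn1, hn2, hn3⟩ :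
      ∃ w1 w2 w3 : Fin 4, w1 ≠ w2 ∧ w1 ≠ w3 ∧ w2 ≠ w3 ∧
        (none : SpV ℓ n) ∉ B w1 ∧ none ∉ B w2 ∧ none ∉ B w3 := by
    by_cases h : ∃ w0, (none : SpV ℓ n) ∈ B w0
    · obtain ⟨w0, hw0⟩ := h
      obtain ⟨a, b, c, hab, hac, hbc, ha0, hb0, hc0⟩ :
          ∃ a b c : Fin 4, a ≠ b ∧ a ≠ c ∧ b ≠ c ∧ a ≠ w0 ∧ b ≠ w0 ∧ c ≠ w0 := by
        fin_cases w0 <;> decide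
      exact ⟨a, b, c, hab, hac, hbc,
        fun hcon => hker a w0 ha0 hcon hw0,
        fun hcon => hker b w0 hb0 hcon hw0,
        fun hcon => hker c w0 hc0 hcon hw0⟩
    · push_neg at h
      exact ⟨0, 1, 2, by decide, by decide, by decide, h 0, h 1, h 2⟩
  obtain ⟨i1, lo1, hi1, hle1, hlt1, hmem1, hint1⟩ := structure_lemma (hBconn w1) hn1 (hBne w1)
  obtain ⟨i2, lo2, hi2, hle2, hlt2, hmem2, hint2⟩ := structure_lemma (hBconn w2) hn2 (hBne w2)
  obtain ⟨i3, lo3, hi3, hle3, hlt3, hmem3, hint3⟩ := structure_lemma (hBconn w3) hn3 (hBne w3)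
  obtain ⟨hib12, e12⟩ := edge_lemma hmem1 hmem2 (hBadj w1 w2 h12)
  obtain ⟨hib13, e13⟩ := edge_lemma hmem1 hmem3 (hBadj w1 w3 h13)
  obtain ⟨hib23, e23⟩ := edge_lemma hmem2 hmem3 (hBadj w2 w3 h23)
  subst hib12
  subst hib13
  have sep12 := sep_lemma (hBdisj h12) hint1 hint2 hle1 hle2
  have sep13 := sep_lemma (hBdisj h13) hint1 hint3 hle1 hle3
  have sep23 := sep_lemma (hBdisj h23) hint2 hint3 hle2 hle3
  obtain ⟨a1, a2, e12⟩ := e12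
  obtain ⟨b1, b3, e13⟩ := e13
  obtain ⟨c2, c3, e23⟩ := e23
  omega

lemma no_k13 {ℓ n : ℕ} {A C0 C1 C2 : Set (SpV ℓ n)}
    (hcA : ((spider ℓ n).induce A).Connected) (hnA : (none : SpV ℓ n) ∉ A) (hneA : A.Nonempty)
    (hc0 : ((spider ℓ n).induce C0).Connected) (hn0 : (none : SpV ℓ n) ∉ C0) (hne0 : C0.Nonempty)
    (hc1 : ((spider ℓ n).induce C1).Connected) (hn1 : (none : SpV ℓ n) ∉ C1) (hne1 : C1.Nonempty)
    (hc2 : ((spider ℓ n).induce C2).Connected) (hn2 : (none : SpV ℓ n) ∉ C2) (hne2 : C2.Nonempty)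
    (hd0 : Disjoint A C0) (hd1 : Disjoint A C1) (hd2 : Disjoint A C2)
    (hd01 : Disjoint C0 C1) (hd02 : Disjoint C0 C2) (hd12 : Disjoint C1 C2)
    (ha0 : ∃ u ∈ A, ∃ v ∈ C0, (spider ℓ n).Adj u v)
    (ha1 : ∃ u ∈ A, ∃ v ∈ C1, (spider ℓ n).Adj u v)
    (ha2 : ∃ u ∈ A, ∃ v ∈ C2, (spider ℓ n).Adj u v) : False := by
  obtain ⟨iA, loA, hiA, hleA, hltA, hmemA, hintA⟩ := structure_lemma hcA hnA hneA
  obtain ⟨i0, lo0, hi0, hle0, hlt0, hmem0, hint0⟩ := structure_lemma hc0 hn0 hne0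
  obtain ⟨i1, lo1, hi1, hle1, hlt1, hmem1, hint1⟩ := structure_lemma hc1 hn1 hne1
  obtain ⟨i2, lo2, hi2, hle2, hlt2, hmem2, hint2⟩ := structure_lemma hc2 hn2 hne2
  obtain ⟨hib0, e0⟩ := edge_lemma hmemA hmem0 ha0
  obtain ⟨hib1, e1⟩ := edge_lemma hmemA hmem1 ha1
  obtain ⟨hib2, e2⟩ := edge_lemma hmemA hmem2 ha2
  subst hib0; subst hib1; subst hib2
  have sep0 := sep_lemma hd0 hintA hint0 hleA hle0
  have sep1 := sep_lemma hd1 hintA hint1 hleA hle1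
  have sep2 := sep_lemma hd2 hintA hint2 hleA hle2
  have sep01 := sep_lemma hd01 hint0 hint1 hle0 hle1
  have sep02 := sep_lemma hd02 hint0 hint2 hle0 hle2
  have sep12 := sep_lemma hd12 hint1 hint2 hle1 hle2
  obtain ⟨a0, b0, e0⟩ := e0
  obtain ⟨a1, b1, e1⟩ := e1
  obtain ⟨a2, b2, e2⟩ := e2
  omega

lemma no_k22 {ℓ n : ℕ} {A0 A1 C0 C1 : Set (SpV ℓ n)}
    (hcA0 : ((spider ℓ n).induce A0).Connected) (hnA0 : (none : SpV ℓ n) ∉ A0)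
    (hneA0 : A0.Nonempty)
    (hcA1 : ((spider ℓ n).induce A1).Connected) (hnA1 : (none : SpV ℓ n) ∉ A1)
    (hneA1 : A1.Nonempty)
    (hc0 : ((spider ℓ n).induce C0).Connected) (hn0 : (none : SpV ℓ n) ∉ C0) (hne0 : C0.Nonempty)
    (hc1 : ((spider ℓ n).induce C1).Connected) (hn1 : (none : SpV ℓ n) ∉ C1) (hne1 : C1.Nonempty)
    (hdA : Disjoint A0 A1) (hdC : Disjoint C0 C1)
    (hd00 : Disjoint A0 C0) (hd01 : Disjoint A0 C1)
    (hd10 : Disjoint A1 C0) (hd11 : Disjoint A1 C1)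
    (ha00 : ∃ u ∈ A0, ∃ v ∈ C0, (spider ℓ n).Adj u v)
    (ha01 : ∃ u ∈ A0, ∃ v ∈ C1, (spider ℓ n).Adj u v)
    (ha10 : ∃ u ∈ A1, ∃ v ∈ C0, (spider ℓ n).Adj u v)
    (ha11 : ∃ u ∈ A1, ∃ v ∈ C1, (spider ℓ n).Adj u v) : False := by
  obtain ⟨iA0, loA0, hiA0, hleA0, hltA0, hmemA0, hintA0⟩ := structure_lemma hcA0 hnA0 hneA0
  obtain ⟨iA1, loA1, hiA1, hleA1, hltA1, hmemA1, hintA1⟩ := structure_lemma hcA1 hnA1 hneA1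
  obtain ⟨i0, lo0, hi0, hle0, hlt0, hmem0, hint0⟩ := structure_lemma hc0 hn0 hne0
  obtain ⟨i1, lo1, hi1, hle1, hlt1, hmem1, hint1⟩ := structure_lemma hc1 hn1 hne1
  obtain ⟨hib00, e00⟩ := edge_lemma hmemA0 hmem0 ha00
  obtain ⟨hib01, e01⟩ := edge_lemma hmemA0 hmem1 ha01
  obtain ⟨hib10, e10⟩ := edge_lemma hmemA1 hmem0 ha10
  obtain ⟨hib11, e11⟩ := edge_lemma hmemA1 hmem1 ha11
  subst hib00; subst hib01
  subst hib10
  have sepA := sep_lemma hdA hintA0 hintA1 hleA0 hleA1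
  have sepC := sep_lemma hdC hint0 hint1 hle0 hle1
  have sep00 := sep_lemma hd00 hintA0 hint0 hleA0 hle0
  have sep01 := sep_lemma hd01 hintA0 hint1 hleA0 hle1
  have sep10 := sep_lemma hd10 hintA1 hint0 hleA1 hle0
  have sep11 := sep_lemma hd11 hintA1 hint1 hleA1 hle1
  obtain ⟨a0, b0, e00⟩ := e00
  obtain ⟨a1, b1, e01⟩ := e01
  obtain ⟨a2, b2, e10⟩ := e10
  obtain ⟨a3, b3, e11⟩ := e11
  omega

lemma spider_no_K23 {ℓ n : ℕ} :
    ¬ IsMinor (completeBipartiteGraph (Fin 2) (Fin 3)) (spider ℓ n) := by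
  rintro ⟨B, hBne, hBconn, hBdisj, hBadj⟩
  have hbip : ∀ (a : Fin 2) (b : Fin 3),
      (completeBipartiteGraph (Fin 2) (Fin 3)).Adj (Sum.inl a) (Sum.inr b) := by
    intro a b
    simp [completeBipartiteGraph]
  have hker : ∀ w w' : Fin 2 ⊕ Fin 3, w ≠ w' → (none : SpV ℓ n) ∈ B w → none ∈ B w' → False :=
    fun w w' hne h h' => Set.disjoint_left.mp (hBdisj hne) h h'
  by_cases h : ∃ w0, (none : SpV ℓ n) ∈ B w0
  · obtain ⟨w0, hw0⟩ := h
    have hclean : ∀ w, w ≠ w0 → (none : SpV ℓ n) ∉ B w :=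
      fun w hw hcon => hker w w0 hw hcon hw0
    cases w0 with
    | inl a =>
        obtain ⟨a', ha'⟩ : ∃ a' : Fin 2, a' ≠ a := by fin_cases a <;> decide
        exact no_k13 (hBconn (Sum.inl a')) (hclean _ (by simp [ha'])) (hBne _)
          (hBconn (Sum.inr 0)) (hclean _ (by simp)) (hBne _)
          (hBconn (Sum.inr 1)) (hclean _ (by simp)) (hBne _)
          (hBconn (Sum.inr 2)) (hclean _ (by simp)) (hBne _)
          (hBdisj (by simp)) (hBdisj (by simp)) (hBdisj (by simp))
          (hBdisj (by simp)) (hBdisj (by simp)) (hBdisj (by simp))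
          (hBadj _ _ (hbip a' 0)) (hBadj _ _ (hbip a' 1)) (hBadj _ _ (hbip a' 2))
    | inr b =>
        obtain ⟨b1, b2, hb12, hb1, hb2⟩ : ∃ b1 b2 : Fin 3, b1 ≠ b2 ∧ b1 ≠ b ∧ b2 ≠ b := by
          fin_cases b <;> decide
        exact no_k22 (hBconn (Sum.inl 0)) (hclean _ (by simp)) (hBne _)
          (hBconn (Sum.inl 1)) (hclean _ (by simp)) (hBne _)
          (hBconn (Sum.inr b1)) (hclean _ (by simp [hb1])) (hBne _)
          (hBconn (Sum.inr b2)) (hclean _ (by simp [hb2])) (hBne _)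
          (hBdisj (by simp)) (hBdisj (by simp [hb12]))
          (hBdisj (by simp)) (hBdisj (by simp)) (hBdisj (by simp)) (hBdisj (by simp))
          (hBadj _ _ (hbip 0 b1)) (hBadj _ _ (hbip 0 b2))
          (hBadj _ _ (hbip 1 b1)) (hBadj _ _ (hbip 1 b2))
  · push_neg at h
    exact no_k13 (hBconn (Sum.inl 0)) (h _) (hBne _)
      (hBconn (Sum.inr 0)) (h _) (hBne _)
      (hBconn (Sum.inr 1)) (h _) (hBne _)
      (hBconn (Sum.inr 2)) (h _) (hBne _)
      (hBdisj (by simp)) (hBdisj (by simp)) (hBdisj (by simp))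
      (hBdisj (by simp)) (hBdisj (by simp)) (hBdisj (by simp))
      (hBadj _ _ (hbip 0 0)) (hBadj _ _ (hbip 0 1)) (hBadj _ _ (hbip 0 2))

theorem exists_outerplanar_strongExactDistNeg_clique
    (k ℓ : ℕ) (hk : 4 ≤ k) (hke : Even k) :
    ∃ (V : Type) (_ : Fintype V) (G : SimpleGraph V) (σ : Sym2 V → Bool),
      IsOuterplanar G ∧
      (∃ t : Finset V, t.card = ℓ ∧ (strongExactDistNeg G σ k).IsClique ↑t) ∧
      (ℓ : ℕ∞) ≤ (strongExactDistNeg G σ k).chromaticNumber := by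
  set m := k / 2 with hmdef
  have hm : 2 ≤ m := by omega
  have hk2m : k = 2 * m := by
    obtain ⟨r, hr⟩ := hke
    omega
  set n := 2 * m - 1 with hndef
  have hn : n = 2 * m - 1 := rfl
  have hclique : (strongExactDistNeg (spider ℓ n) (spSign ℓ n) k).IsClique
      (↑(Finset.univ.image (fun i : Fin ℓ => (some (i, ⟨m-1, by omega⟩) : SpV ℓ n))) :
        Set (SpV ℓ n)) := by
    intro x hx y hy hxy
    simp only [Finset.coe_image, Finset.coe_univ, Set.image_univ, Set.mem_range] at hx hy
    obtain ⟨i, rfl⟩ := hx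
    obtain ⟨i', rfl⟩ := hy
    have hii' : i ≠ i' := fun h => hxy (by rw [h])
    rw [strongExactDistNeg, SimpleGraph.fromRel_adj]
    refine ⟨hxy, Or.inl ⟨?_, ?_⟩⟩
    · rw [leaf_dist hm hn i i' hii']
      omega
    · obtain ⟨p, hp1, hp2, hp3⟩ := leafPair hm hn i i' hii'
      exact ⟨p, hp1, by omega, hp3⟩
  have hcard : (Finset.univ.image
      (fun i : Fin ℓ => (some (i, ⟨m-1, by omega⟩) : SpV ℓ n))).card = ℓ := by
    rw [Finset.card_image_of_injective _ (fun a b hab => by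
      simpa using (Prod.mk.injEq .. ▸ Option.some_inj.mp hab).1)]
    simp
  refine ⟨SpV ℓ n, inferInstance, spider ℓ n, spSign ℓ n, ⟨spider_no_K4, spider_no_K23⟩,
    ⟨_, hcard, hclique⟩, ?_⟩
  have := hclique.card_le_chromaticNumber
  rwa [hcard] at this
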